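/- Let H be a real Hilbert space and X, Y be H-valued Bochner-integrable random variables with E‖X‖² < ∞, E‖Y‖² < ∞, where X ∼ γ and Y ∼ η are independent. Define the (degree-2) RKHS variance embedding κ²(γ) = E[X⊗X] − E[X]⊗E[X] ∈ H ⊗ H, and similarly κ²(η). Then ‖κ²(γ) − κ²(η)‖²_{H⊗H} = E⟨X,X'⟩⟨X'',X'''⟩ + E⟨Y,Y'⟩⟨Y'',Y'''⟩ + E⟨X,X'⟩² + E⟨Y,Y'⟩² + 2E⟨X,Y⟩⟨X',Y⟩ + 2E⟨X,Y⟩⟨X,Y'⟩ − 2E⟨X,Y⟩⟨X',Y'⟩ − 2E⟨X,Y⟩² − 2E⟨X,X'⟩⟨X,X''⟩ − 2E⟨Y,Y'⟩⟨Y,Y''⟩, where X,X',X'',X''' are independent copies with law γ and Y,Y',Y'',Y''' independent copies with law η. -/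

import Mathlib

open MeasureTheory ProbabilityTheory
open scoped RealInnerProductSpace

/-- An abstract model of the Hilbert-space tensor product `H₁ ⊗ H₂`: a Hilbert space `T`
together with a bilinear map `tmul` satisfying `⟪a⊗b, c⊗d⟫ = ⟪a,c⟫⟪b,d⟫`, whose simple
tensors span a dense subspace. -/
structure HilbertTensorProduct (H₁ H₂ T : Type*)
    [NormedAddCommGroup H₁] [InnerProductSpace ℝ H₁]
    [NormedAddCommGroup H₂] [InnerProductSpace ℝ H₂]
    [NormedAddCommGroup T] [InnerProductSpace ℝ T] where
  tmul : H₁ → H₂ → T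
  add_left : ∀ a a' b, tmul (a + a') b = tmul a b + tmul a' b
  add_right : ∀ a b b', tmul a (b + b') = tmul a b + tmul a b'
  smul_left : ∀ (c : ℝ) a b, tmul (c • a) b = c • tmul a b
  smul_right : ∀ (c : ℝ) a b, tmul a (c • b) = c • tmul a b
  inner_tmul : ∀ a b c d, ⟪tmul a b, tmul c d⟫ = ⟪a, c⟫ * ⟪b, d⟫
  dense_span : Dense (↑(Submodule.span ℝ {x : T | ∃ a b, x = tmul a b}) : Set T)


/-- The squared distance between the degree-2 variance embeddings
`κ²(γ) = E[X⊗X] − E[X]⊗E[X]` and `κ²(η)` expands by the expected kernel trick into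
expectations of products of inner products of independent copies (iterated integrals). -/
theorem norm_sq_variance_embedding_diff
    {H T : Type*}
    [NormedAddCommGroup H] [InnerProductSpace ℝ H] [CompleteSpace H]
    [NormedAddCommGroup T] [InnerProductSpace ℝ T] [CompleteSpace T]
    [MeasurableSpace H] [BorelSpace H]
    (P : HilbertTensorProduct H H T)
    (γ η : Measure H) [IsProbabilityMeasure γ] [IsProbabilityMeasure η]
    (hγi : Integrable (fun x => P.tmul x x) γ) (hηi : Integrable (fun y => P.tmul y y) η)
    (hγ2 : MeasureTheory.MemLp (fun x : H => x) 2 γ)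
    (hη2 : MeasureTheory.MemLp (fun y : H => y) 2 η) :
    ‖((∫ x, P.tmul x x ∂γ) - P.tmul (∫ x, x ∂γ) (∫ x, x ∂γ))
        - ((∫ y, P.tmul y y ∂η) - P.tmul (∫ y, y ∂η) (∫ y, y ∂η))‖ ^ 2
      = (∫ x, ∫ x', ∫ x'', ∫ x''', ⟪x, x'⟫ * ⟪x'', x'''⟫ ∂γ ∂γ ∂γ ∂γ)
        + (∫ y, ∫ y', ∫ y'', ∫ y''', ⟪y, y'⟫ * ⟪y'', y'''⟫ ∂η ∂η ∂η ∂η)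
        + (∫ x, ∫ x', ⟪x, x'⟫ ^ 2 ∂γ ∂γ)
        + (∫ y, ∫ y', ⟪y, y'⟫ ^ 2 ∂η ∂η)
        + 2 * (∫ x, ∫ x', ∫ y, ⟪x, y⟫ * ⟪x', y⟫ ∂η ∂γ ∂γ)
        + 2 * (∫ x, ∫ y, ∫ y', ⟪x, y⟫ * ⟪x, y'⟫ ∂η ∂η ∂γ)
        - 2 * (∫ x, ∫ x', ∫ y, ∫ y', ⟪x, y⟫ * ⟪x', y'⟫ ∂η ∂η ∂γ ∂γ)
        - 2 * (∫ x, ∫ y, ⟪x, y⟫ ^ 2 ∂η ∂γ)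
        - 2 * (∫ x, ∫ x', ∫ x'', ⟪x, x'⟫ * ⟪x, x''⟫ ∂γ ∂γ ∂γ)
        - 2 * (∫ y, ∫ y', ∫ y'', ⟪y, y'⟫ * ⟪y, y''⟫ ∂η ∂η ∂η) := by

  set μ := ∫ x, x ∂γ with hμdef
  set ν := ∫ y, y ∂η with hνdef
  set A := ∫ x, P.tmul x x ∂γ with hAdef
  set B := ∫ y, P.tmul y y ∂η with hBdef
  have hidγ : Integrable (fun x : H => x) γ := hγ2.integrable one_le_two
  have hidη : Integrable (fun y : H => y) η := hη2.integrable one_le_two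
  -- the tensor map as a continuous bilinear map
  have hnorm : ∀ a b : H, ‖P.tmul a b‖ ≤ 1 * ‖a‖ * ‖b‖ := by
    intro a b
    have h1 : ‖P.tmul a b‖ * ‖P.tmul a b‖ = (‖a‖ * ‖b‖) * (‖a‖ * ‖b‖) := by
      rw [← real_inner_self_eq_norm_mul_norm, P.inner_tmul,
        real_inner_self_eq_norm_mul_norm, real_inner_self_eq_norm_mul_norm]
      ring
    have h2 : ‖P.tmul a b‖ = ‖a‖ * ‖b‖ :=
      (mul_self_inj_of_nonneg (norm_nonneg _) (by positivity)).mp h1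
    rw [one_mul]; exact le_of_eq h2
  let L : H →L[ℝ] H →L[ℝ] T :=
    LinearMap.mkContinuous₂
      (LinearMap.mk₂ ℝ P.tmul P.add_left P.smul_left P.add_right P.smul_right) 1 hnorm
  have hL : ∀ a b : H, L a b = P.tmul a b := fun a b => rfl
  have hintLγ : ∀ a : H, Integrable (fun x => P.tmul a x) γ := by
    intro a
    have := (L a).integrable_comp hidγ
    simpa [hL] using this
  have hintLη : ∀ a : H, Integrable (fun y => P.tmul a y) η := by
    intro a
    have := (L a).integrable_comp hidη
    simpa [hL] using this
  have hintRγ : ∀ a : H, Integrable (fun x => P.tmul x a) γ := by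
    intro a
    have := (L.flip a).integrable_comp hidγ
    simpa [hL] using this
  have hintRη : ∀ a : H, Integrable (fun y => P.tmul y a) η := by
    intro a
    have := (L.flip a).integrable_comp hidη
    simpa [hL] using this
  have hcomLγ : ∀ a : H, (∫ x, P.tmul a x ∂γ) = P.tmul a μ := by
    intro a
    have := ((L a).integral_comp_comm hidγ).symm
    simpa [hL] using this.symm
  have hcomLη : ∀ a : H, (∫ y, P.tmul a y ∂η) = P.tmul a ν := by
    intro a
    have := (L a).integral_comp_comm hidη
    simpa [hL] using this
  have hcomRγ : ∀ a : H, (∫ x, P.tmul x a ∂γ) = P.tmul μ a := by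
    intro a
    have := (L.flip a).integral_comp_comm hidγ
    simpa [hL] using this
  have hcomRη : ∀ a : H, (∫ y, P.tmul y a ∂η) = P.tmul ν a := by
    intro a
    have := (L.flip a).integral_comp_comm hidη
    simpa [hL] using this
  -- pointwise rewrites of products of inner products into inner products in T
  have emul : ∀ a b c d : H, ⟪a, c⟫ * ⟪b, d⟫ = ⟪P.tmul a b, P.tmul c d⟫ := by
    intro a b c d; rw [P.inner_tmul]
  have esq : ∀ a b : H, ⟪a, b⟫ ^ 2 = ⟪P.tmul a a, P.tmul b b⟫ := by
    intro a b; rw [P.inner_tmul]; ring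
  -- integral lemmas, all stated in forms matching the goal
  have eQγ : ∀ d : T, (∫ x, ⟪d, P.tmul x x⟫ ∂γ) = ⟪d, A⟫ := fun d => integral_inner hγi d
  have eQγ' : ∀ d : T, (∫ x, ⟪P.tmul x x, d⟫ ∂γ) = ⟪A, d⟫ := by
    intro d
    have hc : ∀ t : T, ⟪t, d⟫ = ⟪d, t⟫ := fun t => real_inner_comm d t
    simp_rw [hc]; exact eQγ d
  have eQη : ∀ d : T, (∫ y, ⟪d, P.tmul y y⟫ ∂η) = ⟪d, B⟫ := fun d => integral_inner hηi d
  have eQη' : ∀ d : T, (∫ y, ⟪P.tmul y y, d⟫ ∂η) = ⟪B, d⟫ := by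
    intro d
    have hc : ∀ t : T, ⟪t, d⟫ = ⟪d, t⟫ := fun t => real_inner_comm d t
    simp_rw [hc]; exact eQη d
  have eMγr : ∀ (c : T) (a : H), (∫ x, ⟪c, P.tmul a x⟫ ∂γ) = ⟪c, P.tmul a μ⟫ := by
    intro c a; rw [integral_inner (hintLγ a) c, hcomLγ]
  have eMγr' : ∀ (c : T) (a : H), (∫ x, ⟪P.tmul a x, c⟫ ∂γ) = ⟪P.tmul a μ, c⟫ := by
    intro c a; have hc : ∀ t : T, ⟪t, c⟫ = ⟪c, t⟫ := fun t => real_inner_comm c t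
    simp_rw [hc]; exact eMγr c a
  have eMγl : ∀ (c : T) (a : H), (∫ x, ⟪c, P.tmul x a⟫ ∂γ) = ⟪c, P.tmul μ a⟫ := by
    intro c a; rw [integral_inner (hintRγ a) c, hcomRγ]
  have eMγl' : ∀ (c : T) (a : H), (∫ x, ⟪P.tmul x a, c⟫ ∂γ) = ⟪P.tmul μ a, c⟫ := by
    intro c a; have hc : ∀ t : T, ⟪t, c⟫ = ⟪c, t⟫ := fun t => real_inner_comm c t
    simp_rw [hc]; exact eMγl c a
  have eMηr : ∀ (c : T) (a : H), (∫ y, ⟪c, P.tmul a y⟫ ∂η) = ⟪c, P.tmul a ν⟫ := by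
    intro c a; rw [integral_inner (hintLη a) c, hcomLη]
  have eMηr' : ∀ (c : T) (a : H), (∫ y, ⟪P.tmul a y, c⟫ ∂η) = ⟪P.tmul a ν, c⟫ := by
    intro c a; have hc : ∀ t : T, ⟪t, c⟫ = ⟪c, t⟫ := fun t => real_inner_comm c t
    simp_rw [hc]; exact eMηr c a
  have eMηl : ∀ (c : T) (a : H), (∫ y, ⟪c, P.tmul y a⟫ ∂η) = ⟪c, P.tmul ν a⟫ := by
    intro c a; rw [integral_inner (hintRη a) c, hcomRη]
  have eMηl' : ∀ (c : T) (a : H), (∫ y, ⟪P.tmul y a, c⟫ ∂η) = ⟪P.tmul ν a, c⟫ := by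
    intro c a; have hc : ∀ t : T, ⟪t, c⟫ = ⟪c, t⟫ := fun t => real_inner_comm c t
    simp_rw [hc]; exact eMηl c a
  -- reduce all the iterated integrals
  simp only [esq, emul, eMγr, eMγr', eMγl, eMγl', eMηr, eMηr', eMηl, eMηl',
    eQγ, eQγ', eQη, eQη']
  -- expand the squared norm
  rw [← real_inner_self_eq_norm_sq]
  set Mγ := P.tmul μ μ
  set Mη := P.tmul ν ν
  simp only [inner_sub_left, inner_sub_right]
  rw [real_inner_comm Mγ A, real_inner_comm B A, real_inner_comm Mη A,
    real_inner_comm B Mγ, real_inner_comm Mη Mγ, real_inner_comm Mη B]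
  ring
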